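/- arXiv:1811.10010 — 5 statements merged into one kernel-verified Lean document; each statement's English description precedes it below -/
import Mathlib

section
/- Let f : ℕ → ℕ be defined by f(1) = f(2) = f(3) = 1 and f(i) = f(i-1) + f(i-2) for i ≥ 4, and let j ≥ 3 be odd. Then the only vector x ∈ {0,1}^j satisfying ∑_{i=1}^{j} f(i)·x_i ≤ 1 + ∑_{i=1}^{(j-1)/2} f(2i+1) − f(j+1) is the zero vector; consequently, the minimum of 1 + ∑_{i=1}^{(j-1)/2} f(2i+1) − ∑_{i=1}^{j} f(i)·x_i over all such feasible x equals f(j+1). -/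
lemma fpos_aux (f : ℕ → ℕ) (hf1 : f 1 = 1) (hf2 : f 2 = 1) (hf3 : f 3 = 1)
    (hrec : ∀ i, 4 ≤ i → f i = f (i - 1) + f (i - 2)) :
    ∀ i, 1 ≤ i → 1 ≤ f i := by
  intro i
  induction i using Nat.strong_induction_on with
  | _ i ih =>
    intro hi
    match i, hi with
    | 1, _ => omega
    | 2, _ => omega
    | 3, _ => omega
    | (n+4), _ =>
      rw [hrec (n+4) (by omega)]
      have e1 : n+4-1 = n+3 := rfl
      have e2 : n+4-2 = n+2 := rfl
      rw [e1, e2]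
      have := ih (n+3) (by omega) (by omega)
      omega

lemma fid_aux (f : ℕ → ℕ) (hf1 : f 1 = 1) (hf2 : f 2 = 1) (hf3 : f 3 = 1)
    (hrec : ∀ i, 4 ≤ i → f i = f (i - 1) + f (i - 2)) :
    ∀ m, 1 ≤ m → 1 + ∑ i ∈ Finset.Icc 1 m, f (2 * i + 1) = f (2 * m + 2) := by
  intro m hm
  induction m with
  | zero => omega
  | succ n ih =>
    rcases Nat.eq_or_lt_of_le hm with h | h
    · simp [← h, hf3]
      have := hrec 4 (by norm_num)
      simp at this
      omega
    · have hn : 1 ≤ n := by omega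
      rw [Finset.sum_Icc_succ_top (by omega)]
      have h1 := hrec (2 * (n + 1) + 2) (by omega)
      have : 2 * (n + 1) + 2 - 1 = 2 * (n + 1) + 1 := by omega
      rw [this] at h1
      have : 2 * (n + 1) + 2 - 2 = 2 * n + 2 := by omega
      rw [this] at h1
      rw [h1, ← ih hn]
      ring

/-- Up-lifting problem in Gu's example: for odd `j ≥ 3`, the only binary vector `x` with
`∑_{i=1}^{j} f i · x i ≤ 1 + ∑_{i=1}^{(j-1)/2} f (2i+1) − f (j+1)` is the zero vector, and
the minimum of the lifting objective over feasible vectors equals `f (j+1)`. -/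
theorem stmt_6 (f : ℕ → ℕ) (hf1 : f 1 = 1) (hf2 : f 2 = 1) (hf3 : f 3 = 1)
    (hrec : ∀ i, 4 ≤ i → f i = f (i - 1) + f (i - 2))
    (j : ℕ) (hj : 3 ≤ j) (hodd : Odd j) :
    (∀ x : ℕ → ℕ, (∀ i ∈ Finset.Icc 1 j, x i = 0 ∨ x i = 1) →
      (∑ i ∈ Finset.Icc 1 j, (f i : ℤ) * (x i : ℤ)) ≤
        1 + (∑ i ∈ Finset.Icc 1 ((j - 1) / 2), (f (2 * i + 1) : ℤ)) - (f (j + 1) : ℤ) →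
      ∀ i ∈ Finset.Icc 1 j, x i = 0) ∧
    IsLeast {g : ℤ | ∃ x : ℕ → ℕ, (∀ i ∈ Finset.Icc 1 j, x i = 0 ∨ x i = 1) ∧
      (∑ i ∈ Finset.Icc 1 j, (f i : ℤ) * (x i : ℤ)) ≤
        1 + (∑ i ∈ Finset.Icc 1 ((j - 1) / 2), (f (2 * i + 1) : ℤ)) - (f (j + 1) : ℤ) ∧
      g = 1 + (∑ i ∈ Finset.Icc 1 ((j - 1) / 2), (f (2 * i + 1) : ℤ)) -
        ∑ i ∈ Finset.Icc 1 j, (f i : ℤ) * (x i : ℤ)}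
      (f (j + 1) : ℤ) := by
  obtain ⟨m, hm⟩ := hodd
  have hm1 : 1 ≤ m := by omega
  have hdiv : (j - 1) / 2 = m := by omega
  have hid : 1 + ∑ i ∈ Finset.Icc 1 m, f (2 * i + 1) = f (2 * m + 2) :=
    fid_aux f hf1 hf2 hf3 hrec m hm1
  have hj1 : j + 1 = 2 * m + 2 := by omega
  have hidZ : (1 : ℤ) + (∑ i ∈ Finset.Icc 1 ((j - 1) / 2), (f (2 * i + 1) : ℤ))
      - (f (j + 1) : ℤ) = 0 := by
    rw [hdiv, hj1, ← hid]
    push_cast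
    ring
  have hfpos := fpos_aux f hf1 hf2 hf3 hrec
  have key : ∀ x : ℕ → ℕ,
      (∑ i ∈ Finset.Icc 1 j, (f i : ℤ) * (x i : ℤ)) ≤
        1 + (∑ i ∈ Finset.Icc 1 ((j - 1) / 2), (f (2 * i + 1) : ℤ)) - (f (j + 1) : ℤ) →
      ∀ i ∈ Finset.Icc 1 j, x i = 0 := by
    intro x hle
    rw [hidZ] at hle
    have hzero : ∀ i ∈ Finset.Icc 1 j, (f i : ℤ) * (x i : ℤ) = 0 := by
      rw [← Finset.sum_eq_zero_iff_of_nonneg (fun i _ => by positivity)]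
      have : (0 : ℤ) ≤ ∑ i ∈ Finset.Icc 1 j, (f i : ℤ) * (x i : ℤ) :=
        Finset.sum_nonneg (fun i _ => by positivity)
      omega
    intro i hi
    have := hzero i hi
    have hf := hfpos i (by simpa using (Finset.mem_Icc.mp hi).1)
    have : (f i : ℤ) ≠ 0 := by exact_mod_cast Nat.one_le_iff_ne_zero.mp hf
    have : (x i : ℤ) = 0 := by
      rcases mul_eq_zero.mp (hzero i hi) with h | h
      · exact absurd h this
      · exact h
    exact_mod_cast this
  refine ⟨fun x _ => key x, ?_, ?_⟩
  · refine ⟨fun _ => 0, fun i _ => Or.inl rfl, ?_, ?_⟩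
    · simp [hidZ]
    · simp
      omega
  · rintro g ⟨x, hx01, hle, hg⟩
    have hz := key x hle
    have : ∑ i ∈ Finset.Icc 1 j, (f i : ℤ) * (x i : ℤ) = 0 :=
      Finset.sum_eq_zero (fun i hi => by rw [hz i hi]; simp)
    rw [hg, this]
    omega
end

section
/- Let f : ℕ → ℕ be defined by f(1) = f(2) = f(3) = 1 and f(i) = f(i-1) + f(i-2) for i ≥ 4, and let j ≥ 4 be even. Then the maximum of ∑_{i=1}^{j} f(i)·x_i − 1 − ∑_{i=1}^{j/2−1} f(2i+1) over all vectors x ∈ {0,1}^j satisfying ∑_{i=1}^{j} f(i)·x_i ≤ 1 + ∑_{i=1}^{j/2−1} f(2i+1) + f(j+1) equals f(j+1), and it is attained at the all-ones vector. -/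
lemma fib_key (f : ℕ → ℕ) (hf1 : f 1 = 1) (hf2 : f 2 = 1) (hf3 : f 3 = 1)
    (hrec : ∀ i, 4 ≤ i → f i = f (i - 1) + f (i - 2)) :
    ∀ k, 2 ≤ k →
      ∑ i ∈ Finset.Icc 1 (2 * k), f i
        = 1 + (∑ i ∈ Finset.Icc 1 (k - 1), f (2 * i + 1)) + f (2 * k + 1) := by
  intro k hk
  induction k, hk using Nat.le_induction with
  | base =>
    have h4 : f 4 = 2 := by rw [hrec 4 (by norm_num)]; norm_num [hf2, hf3]
    have h5 : f 5 = 3 := by rw [hrec 5 (by norm_num)]; norm_num [h4, hf3]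
    have e1 : Finset.Icc 1 (2 * 2) = {1, 2, 3, 4} := by decide
    have e2 : Finset.Icc 1 (2 - 1) = {1} := by decide
    rw [e1, e2]
    simp [Finset.sum_insert, hf1, hf2, hf3, h4, h5]
  | succ k hk ih =>
    have h1 : 2 * (k + 1) = (2 * k + 1) + 1 := by ring
    have h2 : (k + 1) - 1 = (k - 1) + 1 := by omega
    rw [h1, Finset.sum_Icc_succ_top (by omega), Finset.sum_Icc_succ_top (by omega),
      h2, Finset.sum_Icc_succ_top (by omega), ih]
    have h3 : 2 * (k - 1 + 1) + 1 = 2 * k + 1 := by omega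
    have h4 : f (2 * k + 3) = f (2 * k + 2) + f (2 * k + 1) := by
      have := hrec (2 * k + 3) (by omega)
      simpa using this
    rw [h3, show 2 * k + 1 + 1 + 1 = 2 * k + 3 from by ring, h4,
      show 2 * k + 1 + 1 = 2 * k + 2 from by ring]
    ring


/-- Down-lifting problem in Gu's example: for even `j ≥ 4`, the maximum of
`∑_{i=1}^{j} f i · x i − 1 − ∑_{i=1}^{j/2−1} f (2i+1)` over binary vectors `x` with
`∑_{i=1}^{j} f i · x i ≤ 1 + ∑_{i=1}^{j/2−1} f (2i+1) + f (j+1)` equals `f (j+1)`, and it is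
attained at the all-ones vector. -/
theorem stmt_7 (f : ℕ → ℕ) (hf1 : f 1 = 1) (hf2 : f 2 = 1) (hf3 : f 3 = 1)
    (hrec : ∀ i, 4 ≤ i → f i = f (i - 1) + f (i - 2))
    (j : ℕ) (hj : 4 ≤ j) (heven : Even j) :
    IsGreatest {g : ℤ | ∃ x : ℕ → ℕ, (∀ i ∈ Finset.Icc 1 j, x i = 0 ∨ x i = 1) ∧
      (∑ i ∈ Finset.Icc 1 j, (f i : ℤ) * (x i : ℤ)) ≤
        1 + (∑ i ∈ Finset.Icc 1 (j / 2 - 1), (f (2 * i + 1) : ℤ)) + (f (j + 1) : ℤ) ∧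
      g = (∑ i ∈ Finset.Icc 1 j, (f i : ℤ) * (x i : ℤ)) - 1 -
        ∑ i ∈ Finset.Icc 1 (j / 2 - 1), (f (2 * i + 1) : ℤ)}
      (f (j + 1) : ℤ) ∧
    ((∑ i ∈ Finset.Icc 1 j, (f i : ℤ)) ≤
        1 + (∑ i ∈ Finset.Icc 1 (j / 2 - 1), (f (2 * i + 1) : ℤ)) + (f (j + 1) : ℤ) ∧
      (∑ i ∈ Finset.Icc 1 j, (f i : ℤ)) - 1 -
        (∑ i ∈ Finset.Icc 1 (j / 2 - 1), (f (2 * i + 1) : ℤ)) = (f (j + 1) : ℤ)) := by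
  obtain ⟨k, hjk⟩ := heven
  have hk2 : 2 ≤ k := by omega
  have hj2k : j = 2 * k := by omega
  have hdiv : j / 2 = k := by omega
  have key := fib_key f hf1 hf2 hf3 hrec k hk2
  have keyZ : (∑ i ∈ Finset.Icc 1 j, (f i : ℤ))
      = 1 + (∑ i ∈ Finset.Icc 1 (j / 2 - 1), (f (2 * i + 1) : ℤ)) + (f (j + 1) : ℤ) := by
    rw [hdiv, hj2k]
    exact_mod_cast congrArg (Nat.cast : ℕ → ℤ) key
  have hmem : (f (j + 1) : ℤ) ∈ {g : ℤ | ∃ x : ℕ → ℕ,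
      (∀ i ∈ Finset.Icc 1 j, x i = 0 ∨ x i = 1) ∧
      (∑ i ∈ Finset.Icc 1 j, (f i : ℤ) * (x i : ℤ)) ≤
        1 + (∑ i ∈ Finset.Icc 1 (j / 2 - 1), (f (2 * i + 1) : ℤ)) + (f (j + 1) : ℤ) ∧
      (f (j + 1) : ℤ) = (∑ i ∈ Finset.Icc 1 j, (f i : ℤ) * (x i : ℤ)) - 1 -
        ∑ i ∈ Finset.Icc 1 (j / 2 - 1), (f (2 * i + 1) : ℤ)} := by
    refine ⟨fun _ => 1, fun i _ => Or.inr rfl, ?_, ?_⟩ <;> simp [keyZ] <;> ring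
  refine ⟨⟨hmem, ?_⟩, by linarith [keyZ], by linarith [keyZ]⟩
  rintro g ⟨x, hx, hle, hg⟩
  linarith
end

section
/- Let f : ℕ → ℕ be defined by f(1) = f(2) = f(3) = 1 and f(i) = f(i-1) + f(i-2) for i ≥ 4. Let m ≥ 0 be an integer, r = m + 6, and λ = 2^{m+1} − 1. Then the minimum of ∑_{i=1}^{2r} f(i) − ∑_{i=1}^{2r+1} f(i)·x_i over all vectors x ∈ {0,1}^{2r+1} satisfying ∑_{i=1}^{2r+1} λ·f(i)·x_i ≤ λ·∑_{i=1}^{2r} f(i) − (λ(λ+3) + 1) equals λ + 4. -/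
open Finset

private lemma frec' (f : ℕ → ℕ)
    (hrec : ∀ i, 4 ≤ i → f i = f (i - 1) + f (i - 2)) (k : ℕ) (hk : 2 ≤ k) :
    f (k + 2) = f (k + 1) + f k := by
  have h := hrec (k + 2) (by omega)
  rw [show k + 2 - 1 = k + 1 by omega, show k + 2 - 2 = k by omega] at h
  exact h

private lemma fsum (f : ℕ → ℕ) (hf1 : f 1 = 1) (hf3 : f 3 = 1)
    (hrec : ∀ i, 4 ≤ i → f i = f (i - 1) + f (i - 2)) :
    ∀ k, 1 ≤ k → ∑ i ∈ Icc 1 k, f i = f (k + 2) := by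
  intro k hk
  induction k, hk using Nat.le_induction with
  | base => simp [hf1, hf3]
  | succ k hk ih =>
    rw [Finset.sum_Icc_succ_top (by omega), ih]
    exact (frec' f hrec (k + 1) (by omega)).symm

private lemma complete (f : ℕ → ℕ) (hf1 : f 1 = 1) (hf2 : f 2 = 1) (hf3 : f 3 = 1)
    (hrec : ∀ i, 4 ≤ i → f i = f (i - 1) + f (i - 2)) :
    ∀ k, 3 ≤ k → ∀ N, N ≤ f (k + 2) →
      ∃ T : Finset ℕ, T ⊆ Icc 1 k ∧ ∑ i ∈ T, f i = N := by
  intro k hk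
  induction k, hk using Nat.le_induction with
  | base =>
    intro N hN
    have h4 : f 4 = 2 := by
      have h := hrec 4 (by norm_num); norm_num [hf2, hf3] at h; exact h
    have h5 : f 5 = 3 := by
      have h := hrec 5 (by norm_num); norm_num [hf3, h4] at h; exact h
    rw [show (3:ℕ) + 2 = 5 from rfl, h5] at hN
    interval_cases N
    · exact ⟨∅, by simp, by simp⟩
    · exact ⟨{1}, by decide, by simp [hf1]⟩
    · exact ⟨{1, 2}, by decide, by rw [Finset.sum_pair (by norm_num)]; omega⟩
    · refine ⟨{1, 2, 3}, by decide, ?_⟩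
      rw [show ({1,2,3} : Finset ℕ) = insert 1 {2,3} from rfl,
        Finset.sum_insert (by decide), Finset.sum_pair (by norm_num)]
      omega
  | succ k hk ih =>
    intro N hN
    by_cases h : N ≤ f (k + 2)
    · obtain ⟨T, hT, hs⟩ := ih N h
      exact ⟨T, hT.trans (Finset.Icc_subset_Icc_right (by omega)), hs⟩
    · push_neg at h
      have h3 : f (k + 3) = f (k + 2) + f (k + 1) := frec' f hrec (k + 1) (by omega)
      have h2 : f (k + 2) = f (k + 1) + f k := frec' f hrec k (by omega)
      have hN' : N ≤ f (k + 3) := hN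
      obtain ⟨T, hT, hs⟩ := ih (N - f (k + 1)) (by omega)
      have hk1 : k + 1 ∉ T := fun hm => by
        have := Finset.mem_Icc.mp (hT hm); omega
      refine ⟨insert (k + 1) T, ?_, ?_⟩
      · intro i hi
        rcases Finset.mem_insert.mp hi with rfl | hi
        · exact Finset.mem_Icc.mpr ⟨by omega, le_rfl⟩
        · exact Finset.Icc_subset_Icc_right (by omega) (hT hi)
      · rw [Finset.sum_insert hk1, hs]; omega

private lemma growth (f : ℕ → ℕ) (hf1 : f 1 = 1) (hf2 : f 2 = 1) (hf3 : f 3 = 1)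
    (hrec : ∀ i, 4 ≤ i → f i = f (i - 1) + f (i - 2)) :
    ∀ n, 233 * 2 ^ n ≤ f (2 * n + 14) := by
  have h4 : f 4 = 2 := by
    have h := hrec 4 (by norm_num); norm_num [hf2, hf3] at h; exact h
  have h5 : f 5 = 3 := by
    have h := hrec 5 (by norm_num); norm_num [hf3, h4] at h; exact h
  have h6 : f 6 = 5 := by
    have h := hrec 6 (by norm_num); norm_num [h4, h5] at h; exact h
  have h7 : f 7 = 8 := by
    have h := hrec 7 (by norm_num); norm_num [h5, h6] at h; exact h
  have h8 : f 8 = 13 := by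
    have h := hrec 8 (by norm_num); norm_num [h6, h7] at h; exact h
  have h9 : f 9 = 21 := by
    have h := hrec 9 (by norm_num); norm_num [h7, h8] at h; exact h
  have h10 : f 10 = 34 := by
    have h := hrec 10 (by norm_num); norm_num [h8, h9] at h; exact h
  have h11 : f 11 = 55 := by
    have h := hrec 11 (by norm_num); norm_num [h9, h10] at h; exact h
  have h12 : f 12 = 89 := by
    have h := hrec 12 (by norm_num); norm_num [h10, h11] at h; exact h
  have h13 : f 13 = 144 := by
    have h := hrec 13 (by norm_num); norm_num [h11, h12] at h; exact h
  have h14 : f 14 = 233 := by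
    have h := hrec 14 (by norm_num); norm_num [h12, h13] at h; exact h
  intro n
  induction n with
  | zero => simp [h14]
  | succ n ih =>
    have he : 2 * (n + 1) + 14 = (2 * n + 14) + 2 := by omega
    rw [he, frec' f hrec (2 * n + 14) (by omega),
      frec' f hrec (2 * n + 13) (by omega)]
    have hp : 233 * 2 ^ (n + 1) = 2 * (233 * 2 ^ n) := by ring
    have : f (2 * n + 13 + 1) = f (2 * n + 14) := rfl
    omega

/-- Lifting of `x_{2r+2}` in the NP-hardness construction: the minimum of
`∑_{i=1}^{2r} f i − ∑_{i=1}^{2r+1} f i · x i` over binary `x` with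
`∑_{i=1}^{2r+1} λ f i x i ≤ λ ∑_{i=1}^{2r} f i − (λ(λ+3)+1)` equals `λ + 4`. -/
theorem stmt_9 (f : ℕ → ℕ) (hf1 : f 1 = 1) (hf2 : f 2 = 1) (hf3 : f 3 = 1)
    (hrec : ∀ i, 4 ≤ i → f i = f (i - 1) + f (i - 2))
    (m r : ℕ) (hr : r = m + 6) (lam : ℤ) (hlam : lam = 2 ^ (m + 1) - 1) :
    IsLeast {g : ℤ | ∃ x : ℕ → ℕ, (∀ i ∈ Finset.Icc 1 (2 * r + 1), x i = 0 ∨ x i = 1) ∧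
      (∑ i ∈ Finset.Icc 1 (2 * r + 1), lam * (f i : ℤ) * (x i : ℤ)) ≤
        lam * (∑ i ∈ Finset.Icc 1 (2 * r), (f i : ℤ)) - (lam * (lam + 3) + 1) ∧
      g = (∑ i ∈ Finset.Icc 1 (2 * r), (f i : ℤ)) -
        ∑ i ∈ Finset.Icc 1 (2 * r + 1), (f i : ℤ) * (x i : ℤ)}
      (lam + 4) := by
  have hp0 : (0:ℤ) < 2 ^ m := pow_pos (by norm_num) m
  have hP : (2:ℤ) ^ (m + 1) = 2 * 2 ^ m := by ring
  have hlam1 : 1 ≤ lam := by rw [hlam]; nlinarith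
  -- the total sum
  have hS : ∑ i ∈ Icc 1 (2 * r), f i = f (2 * r + 2) :=
    fsum f hf1 hf3 hrec (2 * r) (by omega)
  have hSz : (∑ i ∈ Icc 1 (2 * r), (f i : ℤ)) = (f (2 * r + 2) : ℤ) := by
    exact_mod_cast hS
  -- size bound
  have hge : 2 ^ (m + 1) + 3 ≤ f (2 * r + 2) := by
    have hg := growth f hf1 hf2 hf3 hrec m
    have he : 2 * r + 2 = 2 * m + 14 := by omega
    rw [he]
    have h1 : (1:ℕ) ≤ 2 ^ m := Nat.one_le_two_pow
    have : 2 ^ (m + 1) = 2 * 2 ^ m := by ring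
    omega
  constructor
  · -- membership
    obtain ⟨T, hT, hTsum⟩ := complete f hf1 hf2 hf3 hrec (2 * r) (by omega)
      (f (2 * r + 2) - (2 ^ (m + 1) + 3)) (Nat.sub_le _ _)
    have hTsub : T ⊆ Icc 1 (2 * r + 1) :=
      hT.trans (Finset.Icc_subset_Icc_right (by omega))
    refine ⟨fun i => if i ∈ T then 1 else 0, fun i _ => ?_, ?_, ?_⟩
    · by_cases h : i ∈ T <;> simp [h]
    all_goals {
      have hxsum : ∑ i ∈ Icc 1 (2 * r + 1),
          (f i : ℤ) * (((if i ∈ T then 1 else 0 : ℕ) : ℤ)) =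
          (f (2 * r + 2) : ℤ) - 2 ^ (m + 1) - 3 := by
        have h1 : ∀ i ∈ Icc 1 (2 * r + 1),
            (f i : ℤ) * (((if i ∈ T then 1 else 0 : ℕ) : ℤ)) =
            if i ∈ T then (f i : ℤ) else 0 := by
          intro i _; split <;> simp
        rw [Finset.sum_congr rfl h1, Finset.sum_ite_mem,
          Finset.inter_eq_right.mpr hTsub]
        have : ((f (2 * r + 2) - (2 ^ (m + 1) + 3) : ℕ) : ℤ) =
            (f (2 * r + 2) : ℤ) - 2 ^ (m + 1) - 3 := by
          push_cast [Nat.cast_sub hge]; ring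
        rw [← this]
        exact_mod_cast hTsum
      simp only [mul_assoc, ← Finset.mul_sum]
      try rw [hxsum]
      try simp only [hxsum]
      rw [hSz, hlam]
      nlinarith [hp0, hP]
    }
  · -- lower bound
    rintro g ⟨x, hx01, hcon, rfl⟩
    have hms : ∑ i ∈ Icc 1 (2 * r + 1), lam * (f i : ℤ) * (x i : ℤ) =
        lam * ∑ i ∈ Icc 1 (2 * r + 1), (f i : ℤ) * (x i : ℤ) := by
      rw [Finset.mul_sum]; exact Finset.sum_congr rfl fun i _ => by ring
    rw [hms] at hcon
    set A := ∑ i ∈ Icc 1 (2 * r + 1), (f i : ℤ) * (x i : ℤ) with hA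
    set S := ∑ i ∈ Icc 1 (2 * r), (f i : ℤ) with hSdef
    by_contra hcg
    push_neg at hcg
    have hD : S - A ≤ lam + 3 := by omega
    have h1 : lam * (S - A) ≤ lam * (lam + 3) :=
      mul_le_mul_of_nonneg_left hD (by linarith)
    nlinarith
end

section
/- Let f : ℕ → ℕ be defined by f(1) = f(2) = f(3) = 1 and f(i) = f(i-1) + f(i-2) for i ≥ 4. Let m ≥ 0 be an integer, r = m + 6, and λ = 2^{m+1} − 1. Then the minimum of ∑_{i=1}^{2r} f(i) − ∑_{i=1}^{2r+1} f(i)·x_i − (λ+4)·x_{2r+2} over all vectors x ∈ {0,1}^{2r+2} satisfying ∑_{i=1}^{2r+1} λ·f(i)·x_i + (λ(λ+3) + 1)·x_{2r+2} ≤ λ·∑_{i=1}^{2r} f(i) − (λ(λ+3) − 1) equals λ + 2, and it is attained at a point with x_{2r+2} = 1 and ∑_{i=1}^{2r+1} f(i)·x_i = ∑_{i=1}^{2r} f(i) − 2λ − 6. -/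
open Finset

section Aux
variable (f : ℕ → ℕ) (hf1 : f 1 = 1) (hf2 : f 2 = 1) (hf3 : f 3 = 1)
  (hrec : ∀ i, 4 ≤ i → f i = f (i - 1) + f (i - 2))

include hf1 hf2 hf3 hrec

lemma aux_step : ∀ n : ℕ, f (n+4) = f (n+3) + f (n+2) := by
  intro n
  rw [hrec (n+4) (by omega)]
  congr 2 <;> omega

lemma aux_pos : ∀ k, 1 ≤ k → 1 ≤ f k := by
  intro k
  induction k using Nat.strong_induction_on with
  | _ k ih =>
    intro hk
    match k with
    | 1 => omega
    | 2 => omega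
    | 3 => omega
    | (n+4) =>
      have h1 := aux_step f hf1 hf2 hf3 hrec n
      have h2 := ih (n+3) (by omega) (by omega)
      omega

lemma aux_mono : ∀ k, f (k+2) ≤ f (k+3) := by
  intro k
  match k with
  | 0 =>
    have e2 : (0:ℕ)+2 = 2 := by norm_num
    have e3 : (0:ℕ)+3 = 3 := by norm_num
    rw [e2, e3, hf2, hf3]
  | (n+1) =>
    have h1 := aux_step f hf1 hf2 hf3 hrec n
    have e1 : n+1+2 = n+3 := by omega
    have e2 : n+1+3 = n+4 := by omega
    rw [e1, e2]
    omega

lemma aux_sum : ∀ k, 1 ≤ k → ∑ i ∈ Icc 1 k, f i = f (k+2) := by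
  intro k hk
  induction k, hk using Nat.le_induction with
  | base =>
    rw [show (1:ℕ)+2 = 3 by norm_num, Finset.Icc_self, Finset.sum_singleton, hf1, hf3]
  | succ k hk ih =>
    rw [Finset.sum_Icc_succ_top (by omega), ih]
    have h1 : f (k+1+2) = f (k+2) + f (k+1) := by
      have := aux_step f hf1 hf2 hf3 hrec (k-1)
      have e1 : k-1+4 = k+1+2 := by omega
      have e2 : k-1+3 = k+2 := by omega
      have e3 : k-1+2 = k+1 := by omega
      rw [e1, e2, e3] at this
      exact this
    omega

lemma aux_le : ∀ k, f (k+1) ≤ (∑ i ∈ Icc 1 k, f i) + 1 := by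
  intro k
  match k with
  | 0 => simp [hf1]
  | (n+1) =>
    rw [aux_sum f hf1 hf2 hf3 hrec (n+1) (by omega)]
    have h := aux_mono f hf1 hf2 hf3 hrec n
    have e1 : n+1+1 = n+2 := by omega
    have e2 : n+1+2 = n+3 := by omega
    rw [e1, e2]
    omega

lemma aux_rep : ∀ k, ∀ N ≤ ∑ i ∈ Icc 1 k, f i,
    ∃ x : ℕ → ℕ, (∀ i, x i ≤ 1) ∧ (∀ i, k < i → x i = 0) ∧
      ∑ i ∈ Icc 1 k, f i * x i = N := by
  intro k
  induction k with
  | zero =>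
    intro N hN
    simp at hN
    exact ⟨fun _ => 0, by simp, by simp, by simp [hN]⟩
  | succ k ih =>
    intro N hN
    rw [Finset.sum_Icc_succ_top (by omega)] at hN
    by_cases hc : N ≤ ∑ i ∈ Icc 1 k, f i
    · obtain ⟨x, hx1, hx2, hx3⟩ := ih N hc
      refine ⟨x, hx1, fun i hi => hx2 i (by omega), ?_⟩
      rw [Finset.sum_Icc_succ_top (by omega), hx3, hx2 (k+1) (by omega)]
      simp
    · push_neg at hc
      have hfk : f (k+1) ≤ N := by
        have := aux_le f hf1 hf2 hf3 hrec k
        omega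
      obtain ⟨x, hx1, hx2, hx3⟩ := ih (N - f (k+1)) (by omega)
      refine ⟨Function.update x (k+1) 1, ?_, ?_, ?_⟩
      · intro i
        rcases eq_or_ne i (k+1) with h | h
        · subst h; rw [Function.update_self]
        · rw [Function.update_of_ne h]; exact hx1 i
      · intro i hi
        rw [Function.update_of_ne (by omega)]
        exact hx2 i (by omega)
      · rw [Finset.sum_Icc_succ_top (by omega)]
        have heq : ∑ i ∈ Icc 1 k, f i * Function.update x (k+1) 1 i
            = ∑ i ∈ Icc 1 k, f i * x i := by
          apply Finset.sum_congr rfl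
          intro i hi
          simp only [Finset.mem_Icc] at hi
          rw [Function.update_of_ne (by omega)]
        rw [heq, hx3]
        simp only [Function.update_self]
        omega

lemma aux_grow : ∀ m : ℕ, 2^(m+2) + 4 ≤ f (2*m + 14) := by
  have h4 : f 4 = 2 := by rw [hrec 4 (by omega)]; norm_num; omega
  have h5 : f 5 = 3 := by rw [hrec 5 (by omega)]; norm_num; omega
  have h6 : f 6 = 5 := by rw [hrec 6 (by omega)]; norm_num; omega
  have h7 : f 7 = 8 := by rw [hrec 7 (by omega)]; norm_num; omega
  have h8 : f 8 = 13 := by rw [hrec 8 (by omega)]; norm_num; omega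
  have h9 : f 9 = 21 := by rw [hrec 9 (by omega)]; norm_num; omega
  have h10 : f 10 = 34 := by rw [hrec 10 (by omega)]; norm_num; omega
  have h11 : f 11 = 55 := by rw [hrec 11 (by omega)]; norm_num; omega
  have h12 : f 12 = 89 := by rw [hrec 12 (by omega)]; norm_num; omega
  have h13 : f 13 = 144 := by rw [hrec 13 (by omega)]; norm_num; omega
  have h14 : f 14 = 233 := by rw [hrec 14 (by omega)]; norm_num; omega
  intro m
  induction m with
  | zero =>
    rw [show 2*0+14 = 14 by norm_num, h14]
    norm_num
  | succ n ih =>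
    have hmono := aux_mono f hf1 hf2 hf3 hrec (2*n+12)
    have hr := aux_step f hf1 hf2 hf3 hrec (2*n+12)
    have e1 : 2*n+12+2 = 2*n+14 := by omega
    have e2 : 2*n+12+3 = 2*n+15 := by omega
    have e3 : 2*n+12+4 = 2*n+16 := by omega
    have e4 : 2*(n+1)+14 = 2*n+16 := by omega
    rw [e1, e2] at hmono
    rw [e3, e2, e1] at hr
    rw [e4]
    have hpow : (2:ℕ)^(n+1+2) = 2 * 2^(n+2) := by ring
    omega

end Aux

/-- Lifting of `x_{2r+3}` in the NP-hardness construction: the minimum of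
`∑_{i=1}^{2r} f i − ∑_{i=1}^{2r+1} f i · x i − (λ+4) x_{2r+2}` over binary vectors
`x ∈ {0,1}^{2r+2}` with
`∑_{i=1}^{2r+1} λ f i x i + (λ(λ+3)+1) x_{2r+2} ≤ λ ∑_{i=1}^{2r} f i − (λ(λ+3)−1)`
equals `λ + 2`, attained at a point with `x_{2r+2} = 1` and
`∑_{i=1}^{2r+1} f i x i = ∑_{i=1}^{2r} f i − 2λ − 6`. -/
theorem stmt_10 (f : ℕ → ℕ) (hf1 : f 1 = 1) (hf2 : f 2 = 1) (hf3 : f 3 = 1)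
    (hrec : ∀ i, 4 ≤ i → f i = f (i - 1) + f (i - 2))
    (m r : ℕ) (hr : r = m + 6) (lam : ℤ) (hlam : lam = 2 ^ (m + 1) - 1) :
    IsLeast {g : ℤ | ∃ x : ℕ → ℕ, (∀ i ∈ Finset.Icc 1 (2 * r + 2), x i = 0 ∨ x i = 1) ∧
      (∑ i ∈ Finset.Icc 1 (2 * r + 1), lam * (f i : ℤ) * (x i : ℤ)) +
          (lam * (lam + 3) + 1) * (x (2 * r + 2) : ℤ) ≤
        lam * (∑ i ∈ Finset.Icc 1 (2 * r), (f i : ℤ)) - (lam * (lam + 3) - 1) ∧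
      g = (∑ i ∈ Finset.Icc 1 (2 * r), (f i : ℤ)) -
          (∑ i ∈ Finset.Icc 1 (2 * r + 1), (f i : ℤ) * (x i : ℤ)) -
          (lam + 4) * (x (2 * r + 2) : ℤ)}
      (lam + 2) ∧
    ∃ x : ℕ → ℕ, (∀ i ∈ Finset.Icc 1 (2 * r + 2), x i = 0 ∨ x i = 1) ∧
      (∑ i ∈ Finset.Icc 1 (2 * r + 1), lam * (f i : ℤ) * (x i : ℤ)) +
          (lam * (lam + 3) + 1) * (x (2 * r + 2) : ℤ) ≤
        lam * (∑ i ∈ Finset.Icc 1 (2 * r), (f i : ℤ)) - (lam * (lam + 3) - 1) ∧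
      (∑ i ∈ Finset.Icc 1 (2 * r), (f i : ℤ)) -
          (∑ i ∈ Finset.Icc 1 (2 * r + 1), (f i : ℤ) * (x i : ℤ)) -
          (lam + 4) * (x (2 * r + 2) : ℤ) = lam + 2 ∧
      x (2 * r + 2) = 1 ∧
      (∑ i ∈ Finset.Icc 1 (2 * r + 1), (f i : ℤ) * (x i : ℤ)) =
        (∑ i ∈ Finset.Icc 1 (2 * r), (f i : ℤ)) - 2 * lam - 6 := by
  have hlam1 : (1:ℤ) ≤ lam := by
    have : (2:ℤ) ≤ 2 ^ (m+1) := by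
      calc (2:ℤ) = 2^1 := by norm_num
      _ ≤ 2^(m+1) := by
        apply pow_le_pow_right₀ (by norm_num) (by omega)
    omega
  -- the natural-number "budget"
  set Sn : ℕ := ∑ i ∈ Finset.Icc 1 (2*r), f i with hSn
  have hScast : (∑ i ∈ Finset.Icc 1 (2*r), (f i : ℤ)) = (Sn : ℤ) := by
    rw [hSn]; push_cast; ring
  have hSval : Sn = f (2*r+2) := aux_sum f hf1 hf2 hf3 hrec (2*r) (by omega)
  have hSbig : 2^(m+2) + 4 ≤ Sn := by
    rw [hSval, show 2*r+2 = 2*m+14 by omega]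
    exact aux_grow f hf1 hf2 hf3 hrec m
  -- the witness
  set Nn : ℕ := Sn - (2^(m+2) + 4) with hNn
  have hNle : Nn ≤ ∑ i ∈ Finset.Icc 1 (2*r+1), f i := by
    rw [Finset.sum_Icc_succ_top (by omega : 1 ≤ 2*r+1), ← hSn]
    exact le_trans (Nat.sub_le _ _) (Nat.le_add_right _ _)
  obtain ⟨x0, hx01, hx02, hx03⟩ := aux_rep f hf1 hf2 hf3 hrec (2*r+1) Nn hNle
  set x : ℕ → ℕ := Function.update x0 (2*r+2) 1 with hxdef
  have hxtop : x (2*r+2) = 1 := by rw [hxdef, Function.update_self]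
  have hxagree : ∀ i ∈ Finset.Icc 1 (2*r+1), x i = x0 i := by
    intro i hi
    simp only [Finset.mem_Icc] at hi
    rw [hxdef, Function.update_of_ne (by omega)]
  have hxsum : ∑ i ∈ Finset.Icc 1 (2*r+1), f i * x i = Nn := by
    rw [← hx03]
    exact Finset.sum_congr rfl fun i hi => by rw [hxagree i hi]
  have hlam2 : 2 * lam + 6 = 2^(m+2) + 4 := by
    rw [hlam]; ring
  have hT : (∑ i ∈ Finset.Icc 1 (2*r+1), (f i : ℤ) * (x i : ℤ))
      = (Sn : ℤ) - 2 * lam - 6 := by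
    have h1 : (∑ i ∈ Finset.Icc 1 (2*r+1), (f i : ℤ) * (x i : ℤ))
        = ((∑ i ∈ Finset.Icc 1 (2*r+1), f i * x i : ℕ) : ℤ) := by
      push_cast; ring
    rw [h1, hxsum, hNn]
    have : ((Sn - (2^(m+2)+4) : ℕ) : ℤ) = (Sn : ℤ) - (2^(m+2)+4) := by
      rw [Nat.cast_sub hSbig]; push_cast; ring
    rw [this, hlam]
    push_cast
    ring
  have hxbin : ∀ i ∈ Finset.Icc 1 (2*r+2), x i = 0 ∨ x i = 1 := by
    intro i hi
    rcases eq_or_ne i (2*r+2) with h | h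
    · right; rw [h]; exact hxtop
    · rw [hxdef, Function.update_of_ne h]
      have := hx01 i
      omega
  -- the linearized constraint sum
  have hmulsum : ∀ y : ℕ → ℕ,
      (∑ i ∈ Finset.Icc 1 (2*r+1), lam * (f i : ℤ) * (y i : ℤ))
        = lam * ∑ i ∈ Finset.Icc 1 (2*r+1), (f i : ℤ) * (y i : ℤ) := by
    intro y
    rw [Finset.mul_sum]
    exact Finset.sum_congr rfl fun i _ => by ring
  constructor
  · constructor
    · -- membership: witness x
      refine ⟨x, hxbin, ?_, ?_⟩
      · rw [hmulsum x, hT, hScast, hxtop]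
        push_cast
        ring_nf
        omega
      · rw [hT, hScast, hxtop]
        push_cast
        ring
    · -- lower bound
      rintro g ⟨y, hybin, hycon, hgval⟩
      rw [hmulsum y, hScast] at hycon
      rw [hScast] at hgval
      set T : ℤ := ∑ i ∈ Finset.Icc 1 (2*r+1), (f i : ℤ) * (y i : ℤ) with hTdef
      have hy := hybin (2*r+2) (by simp only [Finset.mem_Icc]; omega)
      have hlampos : (0:ℤ) < lam := by omega
      rcases hy with h0 | h1
      · rw [h0] at hycon hgval
        push_cast at hycon hgval
        have key : lam * (lam + 2) ≤ lam * ((Sn : ℤ) - T) := by nlinarith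
        have : lam + 2 ≤ (Sn : ℤ) - T := le_of_mul_le_mul_left key hlampos
        linarith
      · rw [h1] at hycon hgval
        push_cast at hycon hgval
        have key : lam * (2 * lam + 6) ≤ lam * ((Sn : ℤ) - T) := by nlinarith
        have : 2 * lam + 6 ≤ (Sn : ℤ) - T := le_of_mul_le_mul_left key hlampos
        linarith
  · -- attainment
    refine ⟨x, hxbin, ?_, ?_, hxtop, ?_⟩
    · rw [hmulsum x, hT, hScast, hxtop]
      push_cast
      ring_nf
      omega
    · rw [hT, hScast, hxtop]
      push_cast
      ring
    · rw [hT, hScast]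
end

section
/- Let f : ℕ → ℕ be defined by f(1) = f(2) = f(3) = 1 and f(i) = f(i-1) + f(i-2) for i ≥ 4. Let m ≥ 0 be an integer, r = m + 6, λ = 2^{m+1} − 1, and let ω_1, …, ω_k be integers with 1 ≤ ω_t ≤ λ − 1 for all t and ∑_{t=1}^{k} ω_t = 2λ. For every x ∈ {0,1}^{2r+1}, u, v ∈ {0,1}, y ∈ {0,1}^k with u = 0 or v = 0, the value g = ∑_{i=1}^{2r+1} f(i)·x_i + (λ+4)·u + (λ+2)·v + ∑_{t=1}^{k} ω_t·y_t − ∑_{i=1}^{2r} f(i) satisfies g ≤ f(2r+1) + 3λ + 4. -/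
/-- In the down-lifting problem for the final variable of the NP-hardness construction,
any binary point with `u = 0` or `v = 0` has objective value at most `f (2r+1) + 3λ + 4`. -/
theorem stmt_13 (f : ℕ → ℕ) (hf1 : f 1 = 1) (hf2 : f 2 = 1) (hf3 : f 3 = 1)
    (hrec : ∀ i, 4 ≤ i → f i = f (i - 1) + f (i - 2))
    (m r : ℕ) (hr : r = m + 6) (lam : ℤ) (hlam : lam = 2 ^ (m + 1) - 1)
    (k : ℕ) (ω : ℕ → ℤ)
    (hω : ∀ t ∈ Finset.Icc 1 k, 1 ≤ ω t ∧ ω t ≤ lam - 1)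
    (hωsum : (∑ t ∈ Finset.Icc 1 k, ω t) = 2 * lam) :
    ∀ (x : ℕ → ℕ) (u v : ℕ) (y : ℕ → ℕ),
      (∀ i ∈ Finset.Icc 1 (2 * r + 1), x i = 0 ∨ x i = 1) →
      (u = 0 ∨ u = 1) → (v = 0 ∨ v = 1) →
      (∀ t ∈ Finset.Icc 1 k, y t = 0 ∨ y t = 1) →
      (u = 0 ∨ v = 0) →
      (∑ i ∈ Finset.Icc 1 (2 * r + 1), (f i : ℤ) * (x i : ℤ)) +
          (lam + 4) * (u : ℤ) + (lam + 2) * (v : ℤ) +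
          (∑ t ∈ Finset.Icc 1 k, ω t * (y t : ℤ)) -
          (∑ i ∈ Finset.Icc 1 (2 * r), (f i : ℤ)) ≤
        (f (2 * r + 1) : ℤ) + 3 * lam + 4 := by
  intro x u v y hx hu hv hy huv
  have hlam0 : (0 : ℤ) ≤ lam := by
    have := pow_pos (by norm_num : (0:ℤ) < 2) (m + 1)
    omega
  have hsx : (∑ i ∈ Finset.Icc 1 (2 * r + 1), (f i : ℤ) * (x i : ℤ)) ≤
      ∑ i ∈ Finset.Icc 1 (2 * r + 1), (f i : ℤ) := by
    apply Finset.sum_le_sum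
    intro i hi
    rcases hx i hi with h | h <;> simp [h]
  have hsy : (∑ t ∈ Finset.Icc 1 k, ω t * (y t : ℤ)) ≤ ∑ t ∈ Finset.Icc 1 k, ω t := by
    apply Finset.sum_le_sum
    intro t ht
    have h1 := (hω t ht).1
    rcases hy t ht with h | h <;> simp [h] <;> linarith
  have hsplit : (∑ i ∈ Finset.Icc 1 (2 * r + 1), (f i : ℤ)) =
      (∑ i ∈ Finset.Icc 1 (2 * r), (f i : ℤ)) + (f (2 * r + 1) : ℤ) := by
    rw [← Finset.sum_Icc_succ_top (by omega : 1 ≤ 2 * r + 1)]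
  have huv' : (lam + 4) * (u : ℤ) + (lam + 2) * (v : ℤ) ≤ lam + 4 := by
    rcases huv with h | h
    · subst h
      rcases hv with h | h <;> subst h <;> push_cast <;> linarith
    · subst h
      rcases hu with h | h <;> subst h <;> push_cast <;> linarith
  linarith [hsx, hsy, huv', hωsum]
end
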